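/- For every prime p > 3: ∑_{j=1}^{(p-1)/2} q^{2j}/[2j]_q² ≡ -((p²-1)/24)(1-q)² (mod [p]_q), in the localization of ℚ[q] at [p]_q. -/

import Mathlib

open Polynomial Finset

lemma sumjx {R : Type*} [CommRing R] (x : R) (n : ℕ) :
    (1 - x) * ∑ j ∈ range n, (j : R) * x ^ j
      = (∑ j ∈ range n, x ^ j) - 1 - ((n : R) - 1) * x ^ n := by
  induction n with
  | zero => simp
  | succ n ih =>
    rw [Finset.sum_range_succ, Finset.sum_range_succ (f := fun j => x ^ j)]
    push_cast
    linear_combination ih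

lemma sum_id {K : Type*} [Field K] [CharZero K] (n : ℕ) :
    ∑ j ∈ range n, (j : K) = (n : K) * ((n : K) - 1) / 2 := by
  induction n with
  | zero => simp
  | succ n ih => rw [Finset.sum_range_succ, ih]; push_cast; ring

lemma sum_sq {K : Type*} [Field K] [CharZero K] (n : ℕ) :
    ∑ j ∈ range n, (j : K) ^ 2 = (n : K) * ((n : K) - 1) * (2 * (n : K) - 1) / 6 := by
  induction n with
  | zero => simp
  | succ n ih => rw [Finset.sum_range_succ, ih]; push_cast; ring

lemma range_split {M : Type*} [AddCommMonoid M] (p : ℕ) (hp : 0 < p) (f : ℕ → M) :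
    ∑ k ∈ range p, f k = f 0 + ∑ k ∈ Icc 1 (p-1), f k := by
  have h : Finset.Icc 1 (p-1) = Finset.Ico 1 p := by
    rw [← Finset.Ico_add_one_right_eq_Icc]; congr 1; omega
  rw [h, Finset.range_eq_Ico, Finset.sum_eq_sum_Ico_succ_bot hp]

lemma main_field {K : Type*} [Field K] [CharZero K] (p : ℕ) (hp : p.Prime) (h3 : 3 < p)
    (ζ : K) (hζp : ζ ^ p = 1) (hdvd : ∀ k, ζ ^ k = 1 → p ∣ k) :
    ∑ j ∈ Icc 1 ((p-1)/2), ζ^(2*j) / (1 - ζ^(2*j))^2 = -(((p:K)^2 - 1)/24) := by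
  have hp0 : (0:ℕ) < p := hp.pos
  have hpK : (p : K) ≠ 0 := Nat.cast_ne_zero.mpr hp.ne_zero
  have hodd : p % 2 = 1 := Nat.odd_iff.mp (hp.odd_of_ne_two (by omega))
  have hζne : ∀ t, ¬ p ∣ t → ζ ^ t ≠ 1 := fun t hd h => hd (hdvd t h)
  have hnd : ∀ k, k ∈ Icc 1 (p-1) → ¬ p ∣ k := by
    intro k hk hd
    rw [mem_Icc] at hk
    have := Nat.le_of_dvd (by omega) hd
    omega
  have hone : ∀ k, k ∈ Icc 1 (p-1) → 1 - ζ ^ k ≠ 0 := by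
    intro k hk
    exact sub_ne_zero_of_ne (Ne.symm (hζne k (hnd k hk)))
  -- geometric sums
  have hG : ∀ t, ∑ k ∈ range p, (ζ ^ t) ^ k = if p ∣ t then (p : K) else 0 := by
    intro t
    by_cases hd : p ∣ t
    · rw [if_pos hd]
      obtain ⟨c, rfl⟩ := hd
      have : ζ ^ (p * c) = 1 := by rw [pow_mul, hζp, one_pow]
      simp [this]
    · rw [if_neg hd, geom_sum_eq (hζne t hd)]
      have : (ζ ^ t) ^ p = 1 := by rw [← pow_mul, mul_comm, pow_mul, hζp, one_pow]
      rw [this]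
      simp
  have hE : ∀ t, ∑ k ∈ Icc 1 (p-1), (ζ ^ t) ^ k = (if p ∣ t then (p : K) else 0) - 1 := by
    intro t
    have := range_split p hp0 (fun k => (ζ ^ t) ^ k)
    rw [hG] at this
    rw [this]
    simp
  -- the inverse formula
  set u : ℕ → K := fun k => (1 - ζ ^ k)⁻¹ with hu
  have hufor : ∀ k ∈ Icc 1 (p-1), u k = -(1/(p:K)) * ∑ j ∈ range p, (j : K) * (ζ ^ k) ^ j := by
    intro k hk
    have h1 := sumjx (ζ ^ k) p
    have h2 : (ζ ^ k) ^ p = 1 := by rw [← pow_mul, mul_comm, pow_mul, hζp, one_pow]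
    rw [h2, hG k, if_neg (hnd k hk)] at h1
    have h3 : (1 - ζ ^ k) * ∑ j ∈ range p, (j : K) * (ζ ^ k) ^ j = -(p:K) := by
      rw [h1]; ring
    have h5 : (1 - ζ ^ k) * (-(1/(p:K)) * ∑ j ∈ range p, (j : K) * (ζ ^ k) ^ j) = 1 := by
      rw [show (1 - ζ^k) * (-(1/(p:K)) * ∑ j ∈ range p, (j : K) * (ζ ^ k) ^ j)
          = -(1/(p:K)) * ((1 - ζ^k) * ∑ j ∈ range p, (j : K) * (ζ ^ k) ^ j) from by ring, h3]
      field_simp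
    exact inv_eq_of_mul_eq_one_right h5
  -- s1
  have hs1 : ∑ k ∈ Icc 1 (p-1), u k = ((p:K) - 1) / 2 := by
    rw [Finset.sum_congr rfl hufor, ← Finset.mul_sum]
    have h1 : ∀ k ∈ Icc 1 (p-1), ∑ j ∈ range p, (j:K) * (ζ ^ k) ^ j
        = ∑ j ∈ range p, (j:K) * (ζ ^ j) ^ k := by
      intro k _
      refine Finset.sum_congr rfl fun j _ => ?_
      rw [← pow_mul, mul_comm k j, pow_mul]
    rw [Finset.sum_congr rfl h1, Finset.sum_comm]
    have h2 : ∀ j ∈ range p, ∑ k ∈ Icc 1 (p-1), (j:K) * (ζ ^ j) ^ k = -(j:K) := by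
      intro j hj
      rw [← Finset.mul_sum, hE j]
      rcases Nat.eq_zero_or_pos j with h0 | h1
      · subst h0; simp
      · rw [if_neg (by rw [mem_range] at hj; intro hd; have := Nat.le_of_dvd h1 hd; omega)]
        ring
    rw [Finset.sum_congr rfl h2, Finset.sum_neg_distrib, sum_id]
    field_simp
  -- s2
  have hs2 : ∑ k ∈ Icc 1 (p-1), (u k)^2
      = (1/(p:K))^2 * ( ((p:K)*(p:K)) * ((p:K)*((p:K)-1)/2)
        - (p:K) * ((p:K)*((p:K)-1)*(2*(p:K)-1)/6)
        - ((p:K)*((p:K)-1)/2) * ((p:K)*((p:K)-1)/2) ) := by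
    have key2 : ∀ k ∈ Icc 1 (p-1), (u k)^2
        = (1/(p:K))^2 * ∑ j ∈ range p, ∑ i ∈ range p, ((j:K) * (i:K)) * (ζ ^ (j+i)) ^ k := by
      intro k hk
      rw [hufor k hk]
      rw [show (-(1/(p:K)) * ∑ j ∈ range p, (j:K) * (ζ ^ k) ^ j)^2
          = (1/(p:K))^2 * ((∑ j ∈ range p, (j:K) * (ζ ^ k) ^ j) * (∑ j ∈ range p, (j:K) * (ζ ^ k) ^ j)) from by ring]
      rw [Finset.sum_mul_sum]
      congr 1
      refine Finset.sum_congr rfl fun j _ => Finset.sum_congr rfl fun i _ => ?_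
      rw [show ((j:K) * (ζ^k)^j) * ((i:K) * (ζ^k)^i) = ((j:K)*(i:K)) * ((ζ^k)^j * (ζ^k)^i) from by ring,
        ← pow_add, ← pow_mul, mul_comm k (j+i), pow_mul]
    rw [Finset.sum_congr rfl key2, ← Finset.mul_sum, Finset.sum_comm]
    have hin : ∀ j ∈ range p, ∑ k ∈ Icc 1 (p-1), ∑ i ∈ range p, ((j:K)*(i:K)) * (ζ ^ (j+i)) ^ k
        = ∑ i ∈ range p, ((j:K)*(i:K)) * ((if p ∣ (j+i) then (p:K) else 0) - 1) := by
      intro j _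
      rw [Finset.sum_comm]
      refine Finset.sum_congr rfl fun i _ => ?_
      rw [← Finset.mul_sum, hE]
    rw [Finset.sum_congr rfl hin]
    have hinner : ∀ j ∈ range p, ∑ i ∈ range p, ((j:K)*(i:K)) * (if p ∣ (j+i) then (p:K) else 0)
        = (j:K) * ((p:K) - (j:K)) * (p:K) := by
      intro j hj
      rw [mem_range] at hj
      rcases Nat.eq_zero_or_pos j with h0 | h1
      · subst h0; simp
      · rw [Finset.sum_eq_single (p - j)]
        · rw [if_pos (show p ∣ j + (p - j) from by rw [show j + (p - j) = p from by omega]),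
            Nat.cast_sub (by omega : j ≤ p)]
        · intro i hi hne
          rw [mem_range] at hi
          rw [if_neg, mul_zero]
          rintro ⟨c, hc⟩
          rcases Nat.lt_or_ge c 2 with hc2 | hc2
          · interval_cases c <;> omega
          · have := Nat.mul_le_mul_left p hc2
            omega
        · intro h
          exact absurd (mem_range.mpr (by omega)) h
    have hperj : ∀ j ∈ range p, ∑ i ∈ range p, ((j:K)*(i:K)) * ((if p ∣ (j+i) then (p:K) else 0) - 1)
        = (p:K)*(p:K)*(j:K) - (p:K)*(j:K)^2 - ((p:K)*((p:K)-1)/2) * (j:K) := by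
      intro j hj
      simp only [mul_sub, mul_one]
      rw [Finset.sum_sub_distrib, hinner j hj]
      have : ∑ i ∈ range p, (j:K)*(i:K) = (j:K) * ∑ i ∈ range p, (i:K) := by
        rw [Finset.mul_sum]
      rw [this, sum_id]
      ring
    rw [Finset.sum_congr rfl hperj, Finset.sum_sub_distrib, Finset.sum_sub_distrib,
      ← Finset.mul_sum, ← Finset.mul_sum, ← Finset.mul_sum, sum_id, sum_sq]
  -- termwise identity
  have hterm : ∀ k ∈ Icc 1 (p-1), ζ^k / (1 - ζ^k)^2 = (u k)^2 - u k := by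
    intro k hk
    have h4 := hone k hk
    simp only [hu]
    field_simp
    ring
  have hT : ∑ k ∈ Icc 1 (p-1), ζ^k / (1 - ζ^k)^2
      = (∑ k ∈ Icc 1 (p-1), (u k)^2) - ∑ k ∈ Icc 1 (p-1), u k := by
    rw [Finset.sum_congr rfl hterm, Finset.sum_sub_distrib]
  -- halving
  set m := (p-1)/2 with hmdef
  have hm2 : 2 * m = p - 1 := by omega
  have himg : Icc 1 (p-1) = ((Icc 1 m).image (fun j => 2*j)) ∪ ((Icc 1 m).image (fun j => p - 2*j)) := by
    ext k
    simp only [Finset.mem_union, Finset.mem_image, Finset.mem_Icc]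
    constructor
    · intro hk
      rcases Nat.even_or_odd k with ⟨t, ht⟩ | ⟨t, ht⟩
      · exact Or.inl ⟨t, by omega, by omega⟩
      · exact Or.inr ⟨m - t, by omega, by omega⟩
    · rintro (⟨j, hj, rfl⟩ | ⟨j, hj, rfl⟩) <;> omega
  have hdisj : Disjoint ((Icc 1 m).image (fun j => 2*j)) ((Icc 1 m).image (fun j => p - 2*j)) := by
    rw [Finset.disjoint_left]
    intro a ha hb
    simp only [Finset.mem_image, Finset.mem_Icc] at ha hb
    obtain ⟨x, hx, hxa⟩ := ha
    obtain ⟨y, hy, hya⟩ := hb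
    omega
  have hwinv : ∀ j ∈ Icc 1 m, ζ^(p - 2*j) / (1 - ζ^(p-2*j))^2 = ζ^(2*j) / (1 - ζ^(2*j))^2 := by
    intro j hj
    rw [Finset.mem_Icc] at hj
    have hmem : 2*j ∈ Icc 1 (p-1) := by rw [Finset.mem_Icc]; omega
    have h1 : ζ ^ (p - 2*j) * ζ ^ (2*j) = 1 := by
      rw [← pow_add, show p - 2*j + 2*j = p from by omega, hζp]
    have hy0 : ζ ^ (2*j) ≠ 0 := by
      intro h
      rw [h, mul_zero] at h1
      exact zero_ne_one h1
    have hinv : ζ ^ (p - 2*j) = (ζ ^ (2*j))⁻¹ := eq_inv_of_mul_eq_one_left h1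
    have hne1 : 1 - ζ^(2*j) ≠ 0 := hone _ hmem
    have hne2 : 1 - (ζ^(2*j))⁻¹ ≠ 0 := by
      intro h
      apply hne1
      have : (ζ^(2*j))⁻¹ = 1 := by linear_combination -h
      rw [← inv_inv (ζ^(2*j)), this, inv_one]
      ring
    rw [hinv]
    rw [div_eq_div_iff (pow_ne_zero 2 hne2) (pow_ne_zero 2 hne1)]
    field_simp
    ring
  have h2S : ∑ k ∈ Icc 1 (p-1), ζ^k/(1-ζ^k)^2 = 2 * ∑ j ∈ Icc 1 m, ζ^(2*j)/(1-ζ^(2*j))^2 := by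
    rw [himg, Finset.sum_union hdisj,
      Finset.sum_image (by intro x hx y hy h; simp only at h; omega),
      Finset.sum_image (by
        intro x hx y hy h
        simp only [Finset.mem_coe, Finset.coe_Icc, Set.mem_Icc, Finset.mem_Icc] at hx hy h
        omega),
      Finset.sum_congr rfl hwinv]
    ring
  have hfin : ∑ j ∈ Icc 1 m, ζ^(2*j)/(1-ζ^(2*j))^2
      = ((∑ k ∈ Icc 1 (p-1), (u k)^2) - ∑ k ∈ Icc 1 (p-1), u k) / 2 := by
    rw [← hT, h2S]
    ring
  rw [hfin, hs1, hs2]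
  have hppinv : (p:K) * (p:K)⁻¹ = 1 := mul_inv_cancel₀ hpK
  field_simp
  linear_combination


/-- `[n]_q = 1 + q + ⋯ + q^(n-1)` as a polynomial in `ℚ[q]`. -/
noncomputable def qnum (n : ℕ) : ℚ[X] := ∑ i ∈ Finset.range n, X ^ i

/-- The embedding of `ℚ[q]` into the field of rational functions `ℚ(q)`. -/
noncomputable def Φ : ℚ[X] →+* RatFunc ℚ := algebraMap _ _

/-- `ModPow p k x` says that `x` lies in the ideal generated by `[p]_q ^ k` in the
localization of `ℚ[q]` at the polynomials coprime to the irreducible polynomial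
`[p]_q`: that is, `x = [p]_q ^ k · a / b` with `[p]_q ∤ b`. -/
def ModPow (p k : ℕ) (x : RatFunc ℚ) : Prop :=
  ∃ a b : ℚ[X], ¬ (qnum p ∣ b) ∧ x * Φ b = Φ (qnum p ^ k * a)

set_option maxHeartbeats 2000000 in
/-- For a prime `p > 3`,
`∑_{j=1}^{(p-1)/2} q^(2j)/[2j]_q² ≡ -((p²-1)/24)(1-q)² (mod [p]_q)` in the localization
of `ℚ[q]` at `[p]_q`. -/
theorem q_half_sum_sq (p : ℕ) (hp : p.Prime) (h3 : 3 < p) :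
    ModPow p 1 ((∑ j ∈ Finset.Icc 1 ((p-1)/2), Φ (X^(2*j)) / (Φ (qnum (2*j)))^2)
      + Φ ((((p^2-1)/24 : ℕ) : ℚ[X]) * (1 - X)^2)) := by
  classical
  haveI hfact : Fact p.Prime := ⟨hp⟩
  set m := (p-1)/2 with hmdef
  have hp0 : 0 < p := hp.pos
  have hodd : p % 2 = 1 := Nat.odd_iff.mp (hp.odd_of_ne_two (by omega))
  have hm2 : 2 * m = p - 1 := by omega
  -- basic qnum facts
  have heval : ∀ n : ℕ, (qnum n).eval 1 = n := by
    intro n; simp [qnum, Polynomial.eval_finset_sum]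
  have hqne : ∀ n : ℕ, 0 < n → qnum n ≠ 0 := by
    intro n hn h
    have h2 := heval n
    rw [h, Polynomial.eval_zero] at h2
    have : n = 0 := by exact_mod_cast h2.symm
    omega
  have hdeg : ∀ n : ℕ, 0 < n → (qnum n).natDegree = n - 1 := by
    intro n hn
    have hgm : qnum n * (X - 1) = X^n - 1 := by
      simpa [qnum] using geom_sum_mul (X : ℚ[X]) n
    have h1 : (X^n - 1 : ℚ[X]).natDegree = n := by
      have : (X^n - 1 : ℚ[X]) = X^n - C 1 := by simp
      rw [this, Polynomial.natDegree_X_pow_sub_C]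
    have hX1 : (X - 1 : ℚ[X]) = X - C 1 := by simp
    have h2 : (qnum n * (X - 1)).natDegree = (qnum n).natDegree + 1 := by
      rw [Polynomial.natDegree_mul (hqne n hn) (by rw [hX1]; exact Polynomial.X_sub_C_ne_zero 1),
        hX1, Polynomial.natDegree_X_sub_C]
    rw [hgm, h1] at h2
    omega
  have hirr : Irreducible (qnum p) := by
    have hc := Polynomial.cyclotomic_prime ℚ p
    rw [qnum, ← hc]
    exact Polynomial.cyclotomic.irreducible_rat hp0
  haveI : Fact (Irreducible (qnum p)) := ⟨hirr⟩
  haveI : CharZero (AdjoinRoot (qnum p)) :=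
    charZero_of_injective_algebraMap (algebraMap ℚ (AdjoinRoot (qnum p))).injective
  set ζ : AdjoinRoot (qnum p) := AdjoinRoot.root (qnum p) with hζdef
  have hQ : ∀ n : ℕ, AdjoinRoot.mk (qnum p) (qnum n) = ∑ i ∈ Finset.range n, ζ ^ i := by
    intro n
    have hqd : qnum n = ∑ i ∈ Finset.range n, X ^ i := rfl
    rw [hqd, map_sum]
    simp [AdjoinRoot.mk_X, hζdef]
  have hsum0 : ∑ i ∈ Finset.range p, ζ ^ i = 0 := by
    rw [← hQ]; exact AdjoinRoot.mk_self
  have hζp : ζ ^ p = 1 := by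
    have h := geom_sum_mul ζ p
    rw [hsum0, zero_mul] at h
    exact sub_eq_zero.mp h.symm
  have hζ1 : ζ ≠ 1 := by
    intro h
    rw [h] at hsum0
    simp at hsum0
    omega
  have hdvdk : ∀ k, ζ ^ k = 1 → p ∣ k := by
    intro k hk
    have horder : orderOf ζ = p := orderOf_eq_prime hζp hζ1
    rw [← horder]
    exact orderOf_dvd_of_pow_eq_one hk
  have hmain := main_field p hp h3 ζ hζp hdvdk
  have hzne : ∀ k, 0 < k → k < p → ζ ^ k ≠ 1 := by
    intro k h1 h2 h
    have := Nat.le_of_dvd h1 (hdvdk k h)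
    omega
  -- cast lemma
  have h24 : (24:ℕ) ∣ p^2 - 1 := by
    have hnd3 : ¬ (3:ℕ) ∣ p := by
      intro h
      have := hp.eq_one_or_self_of_dvd 3 h
      omega
    have hmod : p ^ 2 % 24 = 1 := by
      rw [Nat.pow_mod]
      have e2 : p % 24 % 2 = 1 := by omega
      have e3 : ¬ (3 ∣ p % 24) := by omega
      have hlt : p % 24 < 24 := by omega
      interval_cases h : p % 24 <;> first | decide | omega
    have h1le : 1 ≤ p ^ 2 := Nat.one_le_pow 2 p hp0
    obtain ⟨n, hn⟩ : ∃ n, n = p^2 := ⟨_, rfl⟩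
    rw [← hn] at hmod h1le ⊢
    omega
  have hcast : ((((p^2-1)/24 : ℕ)) : AdjoinRoot (qnum p)) = ((p:AdjoinRoot (qnum p))^2 - 1)/24 := by
    rw [Nat.cast_div h24 (by norm_num), Nat.cast_sub (Nat.one_le_pow 2 p hp0)]
    push_cast
    norm_num
  -- divisibility
  have hdvdN : qnum p ∣ (∑ j ∈ Finset.Icc 1 m, X^(2*j) * ∏ i ∈ (Finset.Icc 1 m).erase j, qnum (2*i)^2)
      + (((p^2-1)/24 : ℕ) : ℚ[X]) * (1-X)^2 * ∏ j ∈ Finset.Icc 1 m, qnum (2*j) ^ 2 := by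
    rw [← AdjoinRoot.mk_eq_zero]
    simp only [map_add, map_mul, map_sum, map_prod, map_pow, map_sub, map_one, map_natCast,
      AdjoinRoot.mk_X, hQ]
    have hstep : ∀ j ∈ Finset.Icc 1 m, (ζ^(2*j)) * ∏ i ∈ (Finset.Icc 1 m).erase j, (∑ r ∈ Finset.range (2*i), ζ^r)^2
        = (∏ i ∈ Finset.Icc 1 m, (∑ r ∈ Finset.range (2*i), ζ^r)^2)
          * ((1-ζ)^2 * (ζ^(2*j) / (1 - ζ^(2*j))^2)) := by
      intro j hj
      have hprodsplit := Finset.mul_prod_erase (Finset.Icc 1 m)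
        (fun i => (∑ r ∈ Finset.range (2*i), ζ^r)^2) hj
      have hgm := geom_sum_mul ζ (2*j)
      rw [Finset.mem_Icc] at hj
      have hz1 : ζ - 1 ≠ 0 := sub_ne_zero_of_ne hζ1
      have hz2 : ζ^(2*j) - 1 ≠ 0 := sub_ne_zero_of_ne (hzne (2*j) (by omega) (by omega))
      have h1mz : (1:AdjoinRoot (qnum p)) - ζ^(2*j) ≠ 0 := by
        intro h; exact hz2 (by linear_combination -h)
      have hQj : (∑ r ∈ Finset.range (2*j), ζ^r) = (ζ^(2*j) - 1) / (ζ - 1) := by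
        rw [eq_div_iff hz1]; exact hgm
      have hkey : ζ^(2*j) = (∑ r ∈ Finset.range (2*j), ζ^r)^2
          * ((1-ζ)^2 * (ζ^(2*j)/(1-ζ^(2*j))^2)) := by
        rw [hQj]
        field_simp
        ring
      rw [← hprodsplit]
      linear_combination (∏ i ∈ (Finset.Icc 1 m).erase j, (∑ r ∈ Finset.range (2*i), ζ^r)^2) * hkey
    rw [Finset.sum_congr rfl hstep, ← Finset.mul_sum, ← Finset.mul_sum, hmain, hcast]
    ring
  obtain ⟨a, ha⟩ := hdvdN
  -- nonzero images
  have hΦne : ∀ n : ℕ, 0 < n → Φ (qnum n) ≠ 0 := by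
    intro n hn h
    exact hqne n hn (RatFunc.algebraMap_injective ℚ (by rw [h, map_zero] : Φ (qnum n) = Φ 0))
  refine ⟨a, ∏ j ∈ Finset.Icc 1 m, qnum (2*j) ^ 2, ?_, ?_⟩
  · -- non-divisibility of b
    intro hdvdb
    have hprime : Prime (qnum p) := UniqueFactorizationMonoid.irreducible_iff_prime.mp hirr
    obtain ⟨j, hj, hdj⟩ := hprime.exists_mem_finset_dvd hdvdb
    rw [Finset.mem_Icc] at hj
    have hdj' : qnum p ∣ qnum (2*j) := hprime.dvd_of_dvd_pow hdj
    have hle := Polynomial.natDegree_le_of_dvd hdj' (hqne (2*j) (by omega))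
    rw [hdeg p hp0, hdeg (2*j) (by omega)] at hle
    omega
  · rw [pow_one, ← ha]
    rw [add_mul, Finset.sum_mul, map_add, map_sum]
    congr 1
    · refine Finset.sum_congr rfl fun j hj => ?_
      rw [Finset.mem_Icc] at hj
      have hF : Φ (qnum (2*j)) ≠ 0 := hΦne (2*j) (by omega)
      have hb2 : Φ (∏ j ∈ Finset.Icc 1 m, qnum (2*j) ^ 2)
          = Φ (qnum (2*j))^2 * ∏ i ∈ (Finset.Icc 1 m).erase j, Φ (qnum (2*i))^2 := by
        simp only [map_prod, map_pow]
        exact (Finset.mul_prod_erase _ _ (by rw [Finset.mem_Icc]; omega)).symm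
      rw [hb2, map_mul, map_prod]
      simp only [map_pow]
      field_simp
    · rw [← map_mul]
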